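/- Let μ_i, μ_j > 0, k_i, k_j ≥ 0, t_k > 0 and 0 < D < 1, and let (s_c)_{c≥1} be a real sequence. Let (X_i(c))_{c≥1} and (X_j(c))_{c≥1} be real sequences with X_i(1), X_j(1) ≥ 0 satisfying X_i(c+1) = D·X_i(c)·exp(μ_i s_c I_e(X_i(c)) − k_i t_k) and X_j(c+1) = D·X_j(c)·exp(μ_j s_c I_e(X_j(c)) − k_j t_k) for all c ≥ 1, where I_e(x) = 1 if x ≥ X_e and 0 otherwise for a fixed X_e > 0. If both X_i(c) and X_j(c) converge to positive limits as c → ∞, then (k_i t_k − log D)/μ_i = (k_j t_k − log D)/μ_j. -/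

import Mathlib

open scoped Classical

/-- Extinction indicator: `Ie Xe x = 1` if `x ≥ Xe`, else `0`. -/
noncomputable def Ie (Xe x : ℝ) : ℝ := if Xe ≤ x then 1 else 0

open Filter in
lemma stmt10_key (μ k tk D Xe : ℝ) (hμ : 0 < μ) (hk : 0 ≤ k) (htk : 0 < tk)
    (hD0 : 0 < D) (hD1 : D < 1) (hXe : 0 < Xe) (s X : ℕ → ℝ) (hX0 : 0 ≤ X 0)
    (hrec : ∀ c, X (c + 1) = D * X c * Real.exp (μ * s c * Ie Xe (X c) - k * tk))
    (L : ℝ) (hL : 0 < L) (h : Filter.Tendsto X Filter.atTop (nhds L)) :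
    Filter.Tendsto s Filter.atTop (nhds ((k * tk - Real.log D) / μ)) := by
  -- positivity of X
  have hXpos : ∀ c, 0 < X c := by
    rcases eq_or_lt_of_le hX0 with h0 | h0
    · -- X 0 = 0 forces X ≡ 0, contradicting L > 0
      exfalso
      have hz : ∀ c, X c = 0 := by
        intro c
        induction c with
        | zero => exact h0.symm
        | succ n ih => simp [hrec n, ih]
      have : Filter.Tendsto X Filter.atTop (nhds 0) := by
        simp only [funext hz]; exact tendsto_const_nhds
      exact absurd (tendsto_nhds_unique h this) (ne_of_gt hL)
    · intro c
      induction c with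
      | zero => exact h0
      | succ n ih =>
        rw [hrec n]
        positivity
  -- the ratio tends to 1
  have hshift : Filter.Tendsto (fun c => X (c + 1)) Filter.atTop (nhds L) :=
    h.comp (tendsto_add_atTop_nat 1)
  have hratio : Filter.Tendsto (fun c => X (c + 1) / X c) Filter.atTop (nhds 1) := by
    have := hshift.div h (ne_of_gt hL)
    rw [div_self (ne_of_gt hL)] at this
    exact this
  have hratio' : Filter.Tendsto
      (fun c => D * Real.exp (μ * s c * Ie Xe (X c) - k * tk)) Filter.atTop (nhds 1) := by
    refine hratio.congr fun c => ?_
    rw [hrec c]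
    field_simp [ne_of_gt (hXpos c)]
  -- take logs
  have hlog : Filter.Tendsto
      (fun c => Real.log (D * Real.exp (μ * s c * Ie Xe (X c) - k * tk)))
      Filter.atTop (nhds 0) := by
    have := (Real.continuousAt_log one_ne_zero).tendsto.comp hratio'
    rw [Real.log_one] at this
    exact this
  have hlog' : Filter.Tendsto
      (fun c => Real.log D + (μ * s c * Ie Xe (X c) - k * tk)) Filter.atTop (nhds 0) := by
    refine hlog.congr fun c => ?_
    rw [Real.log_mul (ne_of_gt hD0) (Real.exp_ne_zero _), Real.log_exp]
  have hf : Filter.Tendsto (fun c => μ * s c * Ie Xe (X c)) Filter.atTop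
      (nhds (k * tk - Real.log D)) := by
    have := hlog'.sub_const (Real.log D - k * tk)
    refine this.congr' ?_ |>.mono_right ?_
    · filter_upwards with c; ring
    · simp only [zero_sub]
      apply le_of_eq
      congr 1
      ring
  -- the limit is positive
  have hA : 0 < k * tk - Real.log D := by
    have hlogD : Real.log D < 0 := Real.log_neg hD0 hD1
    nlinarith [mul_nonneg hk htk.le]
  -- eventually the indicator is 1
  have hev : ∀ᶠ c in Filter.atTop, μ * s c * Ie Xe (X c) = μ * s c := by
    filter_upwards [hf.eventually (eventually_gt_nhds hA)] with c hc
    by_cases hI : Xe ≤ X c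
    · simp [Ie, hI]
    · simp [Ie, hI] at hc
  have hμs : Filter.Tendsto (fun c => μ * s c) Filter.atTop (nhds (k * tk - Real.log D)) :=
    hf.congr' hev
  have := hμs.div_const μ
  exact this.congr fun c => mul_div_cancel_left₀ _ (ne_of_gt hμ)

/-- Corollary 1 of the paper: two strains sharing the same growth
durations that both survive cyclic treatment have equal equilibrium times. -/
theorem stmt10 (μi μj ki kj tk D Xe : ℝ) (hμi : 0 < μi) (hμj : 0 < μj)
    (hki : 0 ≤ ki) (hkj : 0 ≤ kj) (htk : 0 < tk) (hD0 : 0 < D) (hD1 : D < 1)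
    (hXe : 0 < Xe) (s : ℕ → ℝ) (Xi Xj : ℕ → ℝ) (hXi0 : 0 ≤ Xi 0) (hXj0 : 0 ≤ Xj 0)
    (hreci : ∀ c, Xi (c + 1) = D * Xi c * Real.exp (μi * s c * Ie Xe (Xi c) - ki * tk))
    (hrecj : ∀ c, Xj (c + 1) = D * Xj c * Real.exp (μj * s c * Ie Xe (Xj c) - kj * tk))
    (Li Lj : ℝ) (hLi : 0 < Li) (hLj : 0 < Lj)
    (hi : Filter.Tendsto Xi Filter.atTop (nhds Li))
    (hj : Filter.Tendsto Xj Filter.atTop (nhds Lj)) :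
    (ki * tk - Real.log D) / μi = (kj * tk - Real.log D) / μj :=
  tendsto_nhds_unique
    (stmt10_key μi ki tk D Xe hμi hki htk hD0 hD1 hXe s Xi hXi0 hreci Li hLi hi)
    (stmt10_key μj kj tk D Xe hμj hkj htk hD0 hD1 hXe s Xj hXj0 hrecj Lj hLj hj)
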